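/- Assume σ‖W‖ ≤ √n‖A‖ (operator norms), so that ‖Δ‖ ≤ 3√n‖A‖‖W‖. Then for any X, Y ∈ N_ε, d_F(LX, LY) ≤ (2ε√d + 3σ‖W‖/(√n‖A‖)) · d_F(X,Y). -/

import Mathlib

open MeasureTheory Matrix Filter

namespace GOPP

/-- Frobenius norm of a real matrix. -/
noncomputable def frob {α β : Type*} [Fintype α] [Fintype β] (X : Matrix α β ℝ) : ℝ :=
  Real.sqrt (∑ i, ∑ j, X i j ^ 2)

/-- Euclidean norm of a vector. -/
noncomputable def vnorm {β : Type*} [Fintype β] (v : β → ℝ) : ℝ :=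
  Real.sqrt (∑ j, v j ^ 2)

/-- Operator (spectral) norm: the supremum of ‖Xu‖ over unit vectors u. -/
noncomputable def opNorm {α β : Type*} [Fintype α] [Fintype β] (X : Matrix α β ℝ) : ℝ :=
  sSup {r : ℝ | ∃ u : β → ℝ, vnorm u = 1 ∧ r = vnorm (X.mulVec u)}

/-- Smallest singular value: the infimum of ‖uᵀX‖ over unit vectors u (for a d×m matrix
with d ≤ m this is the d-th largest singular value; for square matrices it is σ_min). -/
noncomputable def sigmaMin {α β : Type*} [Fintype α] [Fintype β] (X : Matrix α β ℝ) : ℝ :=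
  sInf {r : ℝ | ∃ u : α → ℝ, vnorm u = 1 ∧ r = vnorm (Matrix.vecMul u X)}

/-- Condition number κ = σ_max/σ_min. -/
noncomputable def kappa {d m : ℕ} (A : Matrix (Fin d) (Fin m) ℝ) : ℝ :=
  opNorm A / sigmaMin A

/-- Q is an orthogonal matrix. -/
def IsOrth {d : ℕ} (Q : Matrix (Fin d) (Fin d) ℝ) : Prop :=
  Qᵀ * Q = 1 ∧ Q * Qᵀ = 1

/-- Nuclear norm, via the dual characterization ‖M‖_* = max_{Q ∈ O(d)} ⟨Q, M⟩. -/
noncomputable def nuclearNorm {d : ℕ} (M : Matrix (Fin d) (Fin d) ℝ) : ℝ :=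
  sSup {r : ℝ | ∃ Q : Matrix (Fin d) (Fin d) ℝ, IsOrth Q ∧ r = Matrix.trace (Qᵀ * M)}

/-- The i-th d×k block of an (nd)×k block matrix. -/
def blk {n d k : ℕ} (S : Matrix (Fin n × Fin d) (Fin k) ℝ) (i : Fin n) :
    Matrix (Fin d) (Fin k) ℝ :=
  Matrix.of fun a b => S (i, a) b

/-- The i-th diagonal d×d block of an (nd)×(nd) matrix. -/
def dblk {n d : ℕ} (G : Matrix (Fin n × Fin d) (Fin n × Fin d) ℝ) (i : Fin n) :
    Matrix (Fin d) (Fin d) ℝ :=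
  Matrix.of fun a b => G (i, a) (i, b)

/-- S ∈ O(d)^{⊗n}: each of the n d×d blocks of S is orthogonal. -/
def OrthBlocks {n d : ℕ} (S : Matrix (Fin n × Fin d) (Fin d) ℝ) : Prop :=
  ∀ i, IsOrth (blk S i)

/-- Z ∈ ℝ^{nd×d}: the vertical stack of n copies of I_d. -/
def ZStack (n d : ℕ) : Matrix (Fin n × Fin d) (Fin d) ℝ :=
  Matrix.of fun p j => if p.2 = j then 1 else 0

/-- Vertical stack of n given d×k matrices. -/
def stack {n d k : ℕ} (B : Fin n → Matrix (Fin d) (Fin k) ℝ) :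
    Matrix (Fin n × Fin d) (Fin k) ℝ :=
  Matrix.of fun p b => B p.1 p.2 b

/-- d_F(X,Y) = min_{Q ∈ O(d)} ‖X − YQ‖_F. -/
noncomputable def dF {n d : ℕ} (X Y : Matrix (Fin n × Fin d) (Fin d) ℝ) : ℝ :=
  sInf {r : ℝ | ∃ Q, IsOrth Q ∧ r = frob (X - Y * Q)}

/-- R is a polar factor P(X) of X: an orthogonal global minimizer of ‖X − Q‖_F over O(d). -/
def IsPolar {d : ℕ} (X R : Matrix (Fin d) (Fin d) ℝ) : Prop :=
  IsOrth R ∧ ∀ Q : Matrix (Fin d) (Fin d) ℝ, IsOrth Q → frob (X - R) ≤ frob (X - Q)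

/-- S = P_n(X): blockwise polar factor. -/
def IsPolarBlocks {n d : ℕ} (X S : Matrix (Fin n × Fin d) (Fin d) ℝ) : Prop :=
  ∀ i, IsPolar (blk X i) (blk S i)

/-- U collects (an orthonormal basis of the span of) the top d left singular vectors of D:
U has orthonormal columns and maximizes the Ky Fan quantity trace(Uᵀ(DDᵀ)U). -/
def IsTopSingVecs {N : Type*} [Fintype N] {d m : ℕ} (D : Matrix N (Fin m) ℝ)
    (U : Matrix N (Fin d) ℝ) : Prop :=
  Uᵀ * U = 1 ∧ ∀ Q : Matrix N (Fin d) ℝ, Qᵀ * Q = 1 →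
    Matrix.trace (Qᵀ * (D * Dᵀ) * Q) ≤ Matrix.trace (Uᵀ * (D * Dᵀ) * U)

/-- (U, S, V) is a top-d singular triple of D: orthonormal U, V, diagonal nonnegative S,
DV = US, DᵀU = VS, and U spans a top-d left singular subspace. -/
def IsSVDTriple {N : Type*} [Fintype N] {d m : ℕ} (D : Matrix N (Fin m) ℝ)
    (U : Matrix N (Fin d) ℝ) (S : Matrix (Fin d) (Fin d) ℝ)
    (V : Matrix (Fin m) (Fin d) ℝ) : Prop :=
  Vᵀ * V = 1 ∧ (∀ a b, a ≠ b → S a b = 0) ∧ (∀ a, 0 ≤ S a a) ∧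
    D * V = U * S ∧ Dᵀ * U = V * S ∧ IsTopSingVecs D U

/-- The generalized power method sequence with spectral initialization, run on the data
matrix D (so with C = DDᵀ): S⁰ = P_n(U) for top singular vectors U of D, and
S^{t+1} = P_n(C Sᵗ). -/
def IsGPM {n d m : ℕ} (D : Matrix (Fin n × Fin d) (Fin m) ℝ)
    (S : ℕ → Matrix (Fin n × Fin d) (Fin d) ℝ) : Prop :=
  (∃ U, IsTopSingVecs D U ∧ IsPolarBlocks U (S 0)) ∧
    ∀ t, IsPolarBlocks (D * Dᵀ * S t) (S (t + 1))

/-- W^(i): W with its i-th block row replaced by 0. -/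
def mask {n d m : ℕ} (W : Matrix (Fin n × Fin d) (Fin m) ℝ) (i : Fin n) :
    Matrix (Fin n × Fin d) (Fin m) ℝ :=
  Matrix.of fun p b => if p.1 = i then 0 else W p b

/-- The noise matrix Δ = WAᵀZᵀ + ZAWᵀ + σWWᵀ. -/
noncomputable def delta {n d m : ℕ} (A : Matrix (Fin d) (Fin m) ℝ)
    (W : Matrix (Fin n × Fin d) (Fin m) ℝ) (σ : ℝ) :
    Matrix (Fin n × Fin d) (Fin n × Fin d) ℝ :=
  W * Aᵀ * (ZStack n d)ᵀ + ZStack n d * A * Wᵀ + σ • (W * Wᵀ)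

/-- The i-th block column Δ_i = WAᵀ + ZAW_iᵀ + σWW_iᵀ of Δ. -/
noncomputable def deltaCol {n d m : ℕ} (A : Matrix (Fin d) (Fin m) ℝ)
    (W : Matrix (Fin n × Fin d) (Fin m) ℝ) (σ : ℝ) (i : Fin n) :
    Matrix (Fin n × Fin d) (Fin d) ℝ :=
  W * Aᵀ + ZStack n d * A * (blk W i)ᵀ + σ • (W * (blk W i)ᵀ)

/-- The operator L S = C S/(n‖A‖²) with C = ZAAᵀZᵀ + σΔ. -/
noncomputable def Lop {n d m : ℕ} (A : Matrix (Fin d) (Fin m) ℝ)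
    (W : Matrix (Fin n × Fin d) (Fin m) ℝ) (σ : ℝ)
    (S : Matrix (Fin n × Fin d) (Fin d) ℝ) : Matrix (Fin n × Fin d) (Fin d) ℝ :=
  ((n : ℝ) * opNorm A ^ 2)⁻¹ •
    ((ZStack n d * A * Aᵀ * (ZStack n d)ᵀ + σ • delta A W σ) * S)

/-- √(nd) + √m + √(2γ n log n). -/
noncomputable def bnd1 (n d m : ℕ) (γ : ℝ) : ℝ :=
  Real.sqrt ((n : ℝ) * d) + Real.sqrt (m : ℝ) + Real.sqrt (2 * γ * n * Real.log n)

/-- √(nd) + √m + √(2γ log n). -/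
noncomputable def bnd2 (n d m : ℕ) (γ : ℝ) : ℝ :=
  Real.sqrt ((n : ℝ) * d) + Real.sqrt (m : ℝ) + Real.sqrt (2 * γ * Real.log n)

/-- The basin of attraction N_ε. -/
def memNeps {n d : ℕ} (ε : ℝ) (S : Matrix (Fin n × Fin d) (Fin d) ℝ) : Prop :=
  OrthBlocks S ∧ dF S (ZStack n d) ≤ ε * Real.sqrt ((n : ℝ) * d)

/-- The basin of attraction N_{ξ,∞}. -/
def memNxi {n d m : ℕ} (W : Matrix (Fin n × Fin d) (Fin m) ℝ) (γ ξ : ℝ)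
    (S : Matrix (Fin n × Fin d) (Fin d) ℝ) : Prop :=
  OrthBlocks S ∧ ∀ i, frob (blk W i * Wᵀ * S) ≤ ξ * Real.sqrt (d : ℝ) * bnd1 n d m γ ^ 2

/-- The distribution of a matrix with i.i.d. standard Gaussian N(0,1) entries. -/
noncomputable def stdGaussian (ι κ : Type*) [Fintype ι] [Fintype κ] :
    Measure (ι → κ → ℝ) :=
  Measure.pi fun _ : ι => Measure.pi fun _ : κ => ProbabilityTheory.gaussianReal 0 1


section AuxLemmas
set_option linter.unusedSectionVars false
set_option linter.unusedVariables false
variable {α β γ : Type*} [Fintype α] [Fintype β] [Fintype γ]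

def vE {β : Type*} [Fintype β] (v : β → ℝ) : EuclideanSpace ℝ β := WithLp.toLp 2 v

lemma vnorm_eq (v : β → ℝ) : vnorm v = ‖vE v‖ := by
  rw [EuclideanSpace.norm_eq, vnorm]
  congr 1; apply Finset.sum_congr rfl; intro j _
  rw [Real.norm_eq_abs, sq_abs]; rfl

def mE (X : Matrix α β ℝ) : EuclideanSpace ℝ (α × β) :=
  WithLp.toLp 2 (fun p : α × β => X p.1 p.2)

lemma frob_eq (X : Matrix α β ℝ) : frob X = ‖mE X‖ := by
  rw [EuclideanSpace.norm_eq, frob]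
  congr 1
  rw [Fintype.sum_prod_type]
  apply Finset.sum_congr rfl; intro i _
  apply Finset.sum_congr rfl; intro j _
  rw [Real.norm_eq_abs, sq_abs]; rfl

lemma mE_sub (X Y : Matrix α β ℝ) : mE (X - Y) = mE X - mE Y := rfl
lemma mE_add (X Y : Matrix α β ℝ) : mE (X + Y) = mE X + mE Y := rfl
lemma mE_smul (c : ℝ) (X : Matrix α β ℝ) : mE (c • X) = c • mE X := rfl

lemma frob_nonneg (X : Matrix α β ℝ) : 0 ≤ frob X := Real.sqrt_nonneg _
lemma vnorm_nonneg (v : β → ℝ) : 0 ≤ vnorm v := Real.sqrt_nonneg _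

lemma frob_add_le (X Y : Matrix α β ℝ) : frob (X + Y) ≤ frob X + frob Y := by
  rw [frob_eq, frob_eq, frob_eq, mE_add]; exact norm_add_le _ _

lemma frob_smul (c : ℝ) (X : Matrix α β ℝ) : frob (c • X) = |c| * frob X := by
  rw [frob_eq, frob_eq, mE_smul, norm_smul, Real.norm_eq_abs]

lemma frob_sq (X : Matrix α β ℝ) : frob X ^ 2 = ∑ i, ∑ j, X i j ^ 2 :=
  Real.sq_sqrt (by positivity)

lemma vnorm_sq (v : β → ℝ) : vnorm v ^ 2 = ∑ j, v j ^ 2 :=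
  Real.sq_sqrt (by positivity)

lemma abs_dot_le (v w : β → ℝ) : |v ⬝ᵥ w| ≤ vnorm v * vnorm w := by
  rw [vnorm_eq, vnorm_eq]
  have : v ⬝ᵥ w = inner ℝ (vE v) (vE w) := by
    rw [dotProduct]; rw [PiLp.inner_apply]; apply Finset.sum_congr rfl; intro j _
    simp [vE, RCLike.inner_apply, mul_comm]
  rw [this]; exact abs_real_inner_le_norm _ _

lemma le_of_sq_le_sq {a b : ℝ} (hb : 0 ≤ b) (h : a^2 ≤ b^2) (ha : 0 ≤ a) : a ≤ b := by nlinarith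

lemma vnorm_smul (c : ℝ) (v : β → ℝ) : vnorm (c • v) = |c| * vnorm v := by
  rw [vnorm_eq, show vE (c • v) = c • vE v from rfl, norm_smul, Real.norm_eq_abs, ← vnorm_eq]

lemma vnorm_eq_zero {v : β → ℝ} (h : vnorm v = 0) : v = 0 := by
  have h2 : ∑ j, v j ^ 2 = 0 := by
    have := vnorm_sq v; rw [h] at this; simpa using this.symm
  funext j
  have := (Finset.sum_eq_zero_iff_of_nonneg (fun i _ => sq_nonneg (v i))).1 h2 j (Finset.mem_univ j)
  exact pow_eq_zero_iff (by norm_num) |>.1 this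

lemma vnorm_mulVec_le_frob (X : Matrix α β ℝ) (u : β → ℝ) :
    vnorm (X.mulVec u) ≤ frob X * vnorm u := by
  apply le_of_sq_le_sq (mul_nonneg (frob_nonneg _) (vnorm_nonneg _)) _ (vnorm_nonneg _)
  rw [mul_pow, vnorm_sq, vnorm_sq, frob_sq, Finset.sum_mul]
  apply Finset.sum_le_sum; intro i _
  calc (X.mulVec u i) ^ 2 = (∑ j, X i j * u j) ^ 2 := rfl
    _ ≤ (∑ j, X i j ^ 2) * ∑ j, u j ^ 2 := Finset.sum_mul_sq_le_sq_mul_sq _ _ _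

lemma opSet_bddAbove (X : Matrix α β ℝ) :
    BddAbove {r : ℝ | ∃ u : β → ℝ, vnorm u = 1 ∧ r = vnorm (X.mulVec u)} := by
  refine ⟨frob X, ?_⟩
  rintro r ⟨u, hu, rfl⟩
  calc vnorm (X.mulVec u) ≤ frob X * vnorm u := vnorm_mulVec_le_frob X u
    _ = frob X := by rw [hu, mul_one]

lemma exists_unit [Nonempty β] : ∃ u : β → ℝ, vnorm u = 1 := by
  classical
  obtain ⟨b⟩ := (inferInstance : Nonempty β)
  refine ⟨Pi.single b 1, ?_⟩
  rw [vnorm]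
  have : ∑ j, Pi.single b 1 j ^ 2 = (1:ℝ) := by
    rw [Finset.sum_eq_single b]
    · simp
    · intro j _ hj; rw [Pi.single_eq_of_ne hj]; ring
    · simp
  rw [this, Real.sqrt_one]

lemma opSet_nonempty [Nonempty β] (X : Matrix α β ℝ) :
    {r : ℝ | ∃ u : β → ℝ, vnorm u = 1 ∧ r = vnorm (X.mulVec u)}.Nonempty := by
  obtain ⟨u, hu⟩ := exists_unit (β := β)
  exact ⟨vnorm (X.mulVec u), u, hu, rfl⟩

lemma opNorm_le_of [Nonempty β] {X : Matrix α β ℝ} {c : ℝ}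
    (h : ∀ u : β → ℝ, vnorm u = 1 → vnorm (X.mulVec u) ≤ c) : opNorm X ≤ c := by
  apply csSup_le (opSet_nonempty X)
  rintro r ⟨u, hu, rfl⟩; exact h u hu

lemma opNorm_nonneg [Nonempty β] (X : Matrix α β ℝ) : 0 ≤ opNorm X := by
  obtain ⟨u, hu⟩ := exists_unit (β := β)
  calc (0:ℝ) ≤ vnorm (X.mulVec u) := vnorm_nonneg _
    _ ≤ opNorm X := le_csSup (opSet_bddAbove X) ⟨u, hu, rfl⟩

lemma le_opNorm (X : Matrix α β ℝ) (u : β → ℝ) :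
    vnorm (X.mulVec u) ≤ opNorm X * vnorm u := by
  rcases eq_or_ne (vnorm u) 0 with h | h
  · have h0a : vnorm (0 : α → ℝ) = 0 := by simp [vnorm]
    have h0b : vnorm (0 : β → ℝ) = 0 := by simp [vnorm]
    rw [vnorm_eq_zero h, mulVec_zero, h0a, h0b, mul_zero]
  · have hpos : 0 < vnorm u := lt_of_le_of_ne (vnorm_nonneg u) (Ne.symm h)
    set w : β → ℝ := (vnorm u)⁻¹ • u with hw
    have hw1 : vnorm w = 1 := by
      rw [hw, vnorm_smul, abs_of_pos (inv_pos.2 hpos), inv_mul_cancel₀ h]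
    have hm : X.mulVec u = vnorm u • X.mulVec w := by
      rw [hw, mulVec_smul, smul_smul, mul_inv_cancel₀ h, one_smul]
    rw [hm, vnorm_smul, abs_of_pos hpos, mul_comm]
    have : vnorm (X.mulVec w) ≤ opNorm X := le_csSup (opSet_bddAbove X) ⟨w, hw1, rfl⟩
    exact mul_le_mul_of_nonneg_right this (le_of_lt hpos)

lemma opNorm_le_frob [Nonempty β] (X : Matrix α β ℝ) : opNorm X ≤ frob X :=
  opNorm_le_of fun u hu => by
    calc vnorm (X.mulVec u) ≤ frob X * vnorm u := vnorm_mulVec_le_frob X u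
      _ = frob X := by rw [hu, mul_one]

lemma opNorm_mul_le [Nonempty β] [Nonempty γ] (X : Matrix α β ℝ) (Y : Matrix β γ ℝ) :
    opNorm (X * Y) ≤ opNorm X * opNorm Y := by
  apply opNorm_le_of; intro u hu
  rw [← mulVec_mulVec]
  calc vnorm (X.mulVec (Y.mulVec u)) ≤ opNorm X * vnorm (Y.mulVec u) := le_opNorm X _
    _ ≤ opNorm X * (opNorm Y * vnorm u) :=
        mul_le_mul_of_nonneg_left (le_opNorm Y u) (opNorm_nonneg X)
    _ = opNorm X * opNorm Y := by rw [hu, mul_one]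

lemma dot_self_eq_vnorm_sq (v : β → ℝ) : v ⬝ᵥ v = vnorm v ^ 2 := by
  rw [vnorm_sq, dotProduct]; apply Finset.sum_congr rfl; intro j _; ring

lemma opNorm_transpose_le [Nonempty α] [Nonempty β] (X : Matrix α β ℝ) :
    opNorm Xᵀ ≤ opNorm X := by
  apply opNorm_le_of; intro v hv
  set y := Xᵀ.mulVec v with hy
  have key : vnorm y ^ 2 = v ⬝ᵥ (X.mulVec y) := by
    rw [← dot_self_eq_vnorm_sq, dotProduct_mulVec v X y,
      show v ᵥ* X = y from by rw [hy, mulVec_transpose]]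
  have h1 : vnorm y ^ 2 ≤ opNorm X * vnorm y := by
    rw [key]
    calc v ⬝ᵥ (X.mulVec y) ≤ |v ⬝ᵥ (X.mulVec y)| := le_abs_self _
      _ ≤ vnorm v * vnorm (X.mulVec y) := by
          have := abs_dot_le v (X.mulVec y); exact this
      _ = vnorm (X.mulVec y) := by rw [hv, one_mul]
      _ ≤ opNorm X * vnorm y := le_opNorm X y
  rcases eq_or_lt_of_le (vnorm_nonneg y) with h0 | h0
  · rw [← h0]; exact opNorm_nonneg X
  · nlinarith

lemma frob_mul_le (X : Matrix α β ℝ) [Nonempty β] (B : Matrix β γ ℝ) :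
    frob (X * B) ≤ opNorm X * frob B := by
  apply le_of_sq_le_sq (mul_nonneg (opNorm_nonneg _) (frob_nonneg _)) _ (frob_nonneg _)
  have e1 : frob (X * B) ^ 2 = ∑ j, vnorm (X.mulVec fun k => B k j) ^ 2 := by
    rw [frob_sq, Finset.sum_comm]
    refine Finset.sum_congr rfl fun j _ => ?_
    rw [vnorm_sq]
    refine Finset.sum_congr rfl fun i _ => ?_
    simp [mul_apply, mulVec, dotProduct]
  have e2 : frob B ^ 2 = ∑ j, vnorm (fun k => B k j) ^ 2 := by
    rw [frob_sq, Finset.sum_comm]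
    exact Finset.sum_congr rfl fun j _ => (vnorm_sq _).symm
  rw [e1, mul_pow, e2, Finset.mul_sum]
  apply Finset.sum_le_sum; intro j _
  rw [← mul_pow]
  exact pow_le_pow_left₀ (vnorm_nonneg _) (le_opNorm X _) 2

lemma isOrth_one {d : ℕ} : IsOrth (1 : Matrix (Fin d) (Fin d) ℝ) := by
  constructor <;> simp

lemma IsOrth.transpose {d : ℕ} {Q : Matrix (Fin d) (Fin d) ℝ} (h : IsOrth Q) : IsOrth Qᵀ :=
  ⟨by rw [transpose_transpose]; exact h.2, by rw [transpose_transpose]; exact h.1⟩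

lemma IsOrth.mul {d : ℕ} {P Q : Matrix (Fin d) (Fin d) ℝ} (hP : IsOrth P) (hQ : IsOrth Q) :
    IsOrth (P * Q) := by
  constructor
  · rw [transpose_mul, mul_assoc, ← mul_assoc Pᵀ, hP.1, one_mul, hQ.1]
  · rw [transpose_mul, mul_assoc, ← mul_assoc Q, hQ.2, one_mul, hP.2]

lemma frob_sq_eq_trace {α β : Type*} [Fintype α] [Fintype β] (X : Matrix α β ℝ) :
    frob X ^ 2 = Matrix.trace (Xᵀ * X) := by
  rw [frob_sq, Matrix.trace, Finset.sum_comm]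
  apply Finset.sum_congr rfl; intro j _
  rw [Matrix.diag, mul_apply]
  apply Finset.sum_congr rfl; intro i _
  simp [transpose_apply]; ring

lemma frob_eq_of_sq_eq {α β α' β' : Type*} [Fintype α] [Fintype β] [Fintype α'] [Fintype β']
    {A : Matrix α β ℝ} {B : Matrix α' β' ℝ} (h : frob A ^ 2 = frob B ^ 2) : frob A = frob B := by
  have := frob_nonneg A; have := frob_nonneg B; nlinarith

lemma frob_transpose {α β : Type*} [Fintype α] [Fintype β] (X : Matrix α β ℝ) :
    frob Xᵀ = frob X := by
  apply frob_eq_of_sq_eq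
  rw [frob_sq, frob_sq, Finset.sum_comm]
  apply Finset.sum_congr rfl; intro i _
  apply Finset.sum_congr rfl; intro j _
  rfl

lemma frob_mul_orth {α : Type*} [Fintype α] {d : ℕ} (N : Matrix α (Fin d) ℝ)
    {Q : Matrix (Fin d) (Fin d) ℝ} (hQ : IsOrth Q) : frob (N * Q) = frob N := by
  apply frob_eq_of_sq_eq
  rw [frob_sq_eq_trace, frob_sq_eq_trace, transpose_mul]
  rw [show Qᵀ * Nᵀ * (N * Q) = Qᵀ * (Nᵀ * N) * Q by
    rw [Matrix.mul_assoc Qᵀ Nᵀ (N * Q), ← Matrix.mul_assoc Nᵀ N Q, ← Matrix.mul_assoc]]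
  rw [Matrix.trace_mul_cycle, hQ.2, Matrix.one_mul]

lemma frob_orth_mul {β : Type*} [Fintype β] {d : ℕ} {Q : Matrix (Fin d) (Fin d) ℝ}
    (hQ : IsOrth Q) (N : Matrix (Fin d) β ℝ) : frob (Q * N) = frob N := by
  apply frob_eq_of_sq_eq
  rw [frob_sq_eq_trace, frob_sq_eq_trace, transpose_mul]
  rw [show Nᵀ * Qᵀ * (Q * N) = Nᵀ * (Qᵀ * Q) * N by
    rw [Matrix.mul_assoc Nᵀ Qᵀ (Q * N), ← Matrix.mul_assoc Qᵀ Q N, ← Matrix.mul_assoc]]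
  rw [hQ.1, Matrix.mul_one]

lemma vnorm_eq_of_dot {β β' : Type*} [Fintype β] [Fintype β'] {a : β → ℝ} {b : β' → ℝ}
    (h : a ⬝ᵥ a = b ⬝ᵥ b) : vnorm a = vnorm b := by
  have h2 : vnorm a ^ 2 = vnorm b ^ 2 := by
    rw [← dot_self_eq_vnorm_sq, ← dot_self_eq_vnorm_sq, h]
  have := vnorm_nonneg a; have := vnorm_nonneg b; nlinarith

lemma vnorm_orth_mulVec {d : ℕ} {Q : Matrix (Fin d) (Fin d) ℝ} (hQ : IsOrth Q) (u : Fin d → ℝ) :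
    vnorm (Q.mulVec u) = vnorm u := by
  apply vnorm_eq_of_dot
  rw [dotProduct_mulVec (Q.mulVec u) Q u,
    show (Q.mulVec u) ᵥ* Q = u from by
      rw [← mulVec_transpose, mulVec_mulVec, hQ.1, one_mulVec]]

lemma opNorm_orth_le {d : ℕ} [Nonempty (Fin d)] {Q : Matrix (Fin d) (Fin d) ℝ}
    (hQ : IsOrth Q) : opNorm Q ≤ 1 :=
  opNorm_le_of fun u hu => by rw [vnorm_orth_mulVec hQ, hu]

lemma frob_eq_vnorm_pair {α β : Type*} [Fintype α] [Fintype β] (X : Matrix α β ℝ) :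
    frob X = vnorm (fun p : α × β => X p.1 p.2) := by
  rw [frob, vnorm]
  congr 1
  rw [Fintype.sum_prod_type]

lemma trace_form_le {α β : Type*} [Fintype α] [Fintype β] (A B : Matrix α β ℝ) :
    Matrix.trace (Aᵀ * B) ≤ frob A * frob B := by
  have e : Matrix.trace (Aᵀ * B) = (fun p : α × β => A p.1 p.2) ⬝ᵥ (fun p => B p.1 p.2) := by
    rw [Matrix.trace, dotProduct, Fintype.sum_prod_type, Finset.sum_comm]
    apply Finset.sum_congr rfl; intro j _
    rw [Matrix.diag, mul_apply]
    apply Finset.sum_congr rfl; intro i _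
    rfl
  rw [e, frob_eq_vnorm_pair, frob_eq_vnorm_pair]
  exact le_trans (le_abs_self _) (abs_dot_le _ _)

lemma herm_transpose_eq {d : ℕ} {P : Matrix (Fin d) (Fin d) ℝ} (h : P.IsHermitian) :
    Pᵀ = P := by
  have : Pᵀ = Pᴴ := by
    ext i j; simp [conjTranspose_apply, transpose_apply]
  rw [this, h]

open scoped MatrixOrder in
lemma psd_sqrt_exists {d : ℕ} {P : Matrix (Fin d) (Fin d) ℝ} (hP : P.PosSemidef) :
    ∃ r : Matrix (Fin d) (Fin d) ℝ, r.PosSemidef ∧ r * r = P :=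
  ⟨CFC.sqrt P, (CFC.sqrt_nonneg P).posSemidef, CFC.sqrt_mul_sqrt_self P hP.nonneg⟩

lemma frob_le_trace_of_posSemidef {d : ℕ} [Nonempty (Fin d)] {P : Matrix (Fin d) (Fin d) ℝ}
    (hP : P.PosSemidef) : frob P ≤ Matrix.trace P := by
  classical
  obtain ⟨r, hrpsd, hrr⟩ := psd_sqrt_exists hP
  have hrh : rᵀ = r := herm_transpose_eq hrpsd.1
  calc frob P = frob (r * r) := by rw [hrr]
    _ ≤ opNorm r * frob r := frob_mul_le r r
    _ ≤ frob r * frob r := mul_le_mul_of_nonneg_right (opNorm_le_frob r) (frob_nonneg r)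
    _ = frob r ^ 2 := (sq (frob r)).symm
    _ = Matrix.trace (rᵀ * r) := frob_sq_eq_trace r
    _ = Matrix.trace P := by rw [hrh, hrr]

lemma star_id_pi {d : ℕ} (x : Fin d → ℝ) : star x = x := by
  funext i; exact star_trivial _

lemma posSemidef_smul_one_sub {d : ℕ} [Nonempty (Fin d)] {H : Matrix (Fin d) (Fin d) ℝ} {c : ℝ}
    (hsym : Hᵀ = H) (hop : opNorm H ≤ c) :
    ((c • (1 : Matrix (Fin d) (Fin d) ℝ)) - H).PosSemidef := by
  refine Matrix.PosSemidef.of_dotProduct_mulVec_nonneg ?_ ?_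
  · show _ᴴ = _
    have h1 : ((c • (1 : Matrix (Fin d) (Fin d) ℝ)) - H)ᴴ
        = ((c • (1 : Matrix (Fin d) (Fin d) ℝ)) - H)ᵀ := by
      ext i j; simp [conjTranspose_apply, transpose_apply]
    rw [h1, transpose_sub, hsym, transpose_smul, transpose_one]
  · intro x
    rw [star_id_pi, sub_mulVec, dotProduct_sub, smul_mulVec, one_mulVec,
      dotProduct_smul]
    have h1 : x ⬝ᵥ H.mulVec x ≤ c * (vnorm x)^2 := by
      calc x ⬝ᵥ H.mulVec x ≤ |x ⬝ᵥ H.mulVec x| := le_abs_self _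
        _ ≤ vnorm x * vnorm (H.mulVec x) := abs_dot_le _ _
        _ ≤ vnorm x * (opNorm H * vnorm x) :=
            mul_le_mul_of_nonneg_left (le_opNorm H x) (vnorm_nonneg x)
        _ ≤ vnorm x * (c * vnorm x) := by
            apply mul_le_mul_of_nonneg_left _ (vnorm_nonneg x)
            exact mul_le_mul_of_nonneg_right hop (vnorm_nonneg x)
        _ = c * (vnorm x)^2 := by ring
    have h2 : x ⬝ᵥ x = vnorm x ^ 2 := dot_self_eq_vnorm_sq x
    simp only [smul_eq_mul, h2]
    linarith

lemma real_ctrans {α β : Type*} [Fintype α] [Fintype β] (M : Matrix α β ℝ) : Mᴴ = Mᵀ := by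
  ext i j; simp [conjTranspose_apply]

lemma isCompact_setOrth {d : ℕ} : IsCompact {Q : Matrix (Fin d) (Fin d) ℝ | IsOrth Q} := by
  have hbox : IsCompact ((Set.univ.pi fun _ : Fin d => Set.univ.pi fun _ : Fin d =>
      Set.Icc (-1:ℝ) 1) : Set (Matrix (Fin d) (Fin d) ℝ)) :=
    isCompact_univ_pi fun _ => isCompact_univ_pi fun _ => isCompact_Icc
  apply IsCompact.of_isClosed_subset hbox
  · have h1 : IsClosed {Q : Matrix (Fin d) (Fin d) ℝ | Qᵀ * Q = 1} :=
      isClosed_eq ((continuous_id.matrix_transpose).matrix_mul continuous_id) continuous_const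
    have h2 : IsClosed {Q : Matrix (Fin d) (Fin d) ℝ | Q * Qᵀ = 1} :=
      isClosed_eq (continuous_id.matrix_mul (continuous_id.matrix_transpose)) continuous_const
    have he : {Q : Matrix (Fin d) (Fin d) ℝ | IsOrth Q}
        = {Q : Matrix (Fin d) (Fin d) ℝ | Qᵀ * Q = 1}
          ∩ {Q : Matrix (Fin d) (Fin d) ℝ | Q * Qᵀ = 1} := rfl
    rw [he]
    exact h1.inter h2
  · intro Q hQ
    rw [Set.mem_univ_pi]; intro i
    rw [Set.mem_univ_pi]; intro j
    have hcol : ∑ k, Q k j * Q k j = 1 := by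
      have := congrFun (congrFun (@id (@HMul.hMul (Matrix (Fin d) (Fin d) ℝ) (Matrix (Fin d) (Fin d) ℝ)
        (Matrix (Fin d) (Fin d) ℝ) _ Qᵀ Q = 1) hQ.1) j) j
      erw [mul_apply] at this
      rw [show (1 : Matrix (Fin d) (Fin d) ℝ) j j = 1 from Matrix.one_apply_eq j] at this
      rw [← this]
      apply Finset.sum_congr rfl; intro k _; rfl
    have hle : Q i j * Q i j ≤ 1 := by
      rw [← hcol]
      apply Finset.single_le_sum (fun k _ => mul_self_nonneg (Q k j)) (Finset.mem_univ i)
    have := abs_le_one_iff_mul_self_le_one.2 hle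
    exact ⟨neg_le_of_abs_le this, le_of_abs_le this⟩

lemma exists_polar_inv {d : ℕ} [Nonempty (Fin d)] (M : Matrix (Fin d) (Fin d) ℝ)
    (hM : M.det ≠ 0) : ∃ Q, IsOrth Q ∧ (Qᵀ * M).PosSemidef := by
  classical
  have hP : (Mᵀ * M).PosSemidef := by
    rw [← real_ctrans]; exact posSemidef_conjTranspose_mul_self M
  obtain ⟨S, hSpsd, hrr⟩ := psd_sqrt_exists hP
  have hsym : Sᵀ = S := herm_transpose_eq hSpsd.1
  have hdetS : S.det ≠ 0 := by
    intro h0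
    have : (Mᵀ * M).det = 0 := by rw [← hrr, det_mul, h0, mul_zero]
    rw [det_mul, det_transpose] at this
    exact hM (mul_self_eq_zero.1 this)
  have hdet : IsUnit S.det := isUnit_iff_ne_zero.2 hdetS
  have h1 : S⁻¹ * S = 1 := Matrix.nonsing_inv_mul S hdet
  have h2 : S * S⁻¹ = 1 := Matrix.mul_nonsing_inv S hdet
  have hQt : (M * S⁻¹)ᵀ = S⁻¹ * Mᵀ := by
    rw [transpose_mul, Matrix.transpose_nonsing_inv, hsym]
  have hQtQ : (M * S⁻¹)ᵀ * (M * S⁻¹) = 1 := by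
    rw [hQt]
    calc S⁻¹ * Mᵀ * (M * S⁻¹)
        = S⁻¹ * (Mᵀ * (M * S⁻¹)) := by rw [mul_assoc]
      _ = S⁻¹ * (Mᵀ * M * S⁻¹) := by rw [mul_assoc]
      _ = S⁻¹ * (S * S * S⁻¹) := by rw [hrr]
      _ = S⁻¹ * (S * (S * S⁻¹)) := by rw [mul_assoc]
      _ = S⁻¹ * (S * 1) := by rw [h2]
      _ = S⁻¹ * S := by rw [mul_one]
      _ = 1 := h1
  have hQM : (M * S⁻¹)ᵀ * M = S := by
    rw [hQt]
    calc S⁻¹ * Mᵀ * M = S⁻¹ * (Mᵀ * M) := by rw [mul_assoc]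
      _ = S⁻¹ * (S * S) := by rw [hrr]
      _ = S⁻¹ * S * S := by rw [← mul_assoc]
      _ = 1 * S := by rw [h1]
      _ = S := by rw [one_mul]
  refine ⟨M * S⁻¹, ⟨hQtQ, mul_eq_one_comm.mp hQtQ⟩, ?_⟩
  rw [hQM]
  exact hSpsd

lemma evalCharpoly {d : ℕ} (M : Matrix (Fin d) (Fin d) ℝ) (t : ℝ) :
    (M.charpoly).eval t = (t • (1 : Matrix (Fin d) (Fin d) ℝ) - M).det := by
  rw [Matrix.charpoly, eval_det, matPolyEquiv_charmatrix]
  congr 1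
  rw [Polynomial.eval_sub, Polynomial.eval_X, Polynomial.eval_C]
  congr 1
  simp [Matrix.scalar, Matrix.smul_one_eq_diagonal]

lemma exists_polar {d : ℕ} [Nonempty (Fin d)] (M : Matrix (Fin d) (Fin d) ℝ) :
    ∃ Q, IsOrth Q ∧ (Qᵀ * M).PosSemidef := by
  classical
  have hex : ∀ k : ℕ, ∃ t : ℝ, (0 < t ∧ t < 1/((k:ℝ)+1)) ∧ (M + t • 1).det ≠ 0 := by
    intro k
    have hp : ((-M).charpoly) ≠ 0 := ((-M).charpoly_monic).ne_zero
    have hfin : {x : ℝ | ((-M).charpoly).IsRoot x}.Finite := Polynomial.finite_setOf_isRoot hp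
    have hlt : (0:ℝ) < 1/((k:ℝ)+1) := by positivity
    have hinf : (Set.Ioo (0:ℝ) (1/((k:ℝ)+1))).Infinite := Set.Ioo_infinite hlt
    have hns : ¬ (Set.Ioo (0:ℝ) (1/((k:ℝ)+1)) ⊆ {x | ((-M).charpoly).IsRoot x}) := by
      intro hsub; exact hinf (hfin.subset hsub)
    obtain ⟨u, hum, hur⟩ := Set.not_subset.1 hns
    refine ⟨u, ⟨hum.1, hum.2⟩, ?_⟩
    have he : (((-M).charpoly).eval u) = (M + u • 1).det := by
      rw [evalCharpoly, sub_neg_eq_add, add_comm]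
    intro h0
    exact hur (by rw [Set.mem_setOf_eq, Polynomial.IsRoot, he]; exact h0)
  choose t ht using hex
  have hQk : ∀ k, ∃ Q, IsOrth Q ∧ (Qᵀ * (M + t k • 1)).PosSemidef := fun k =>
    exists_polar_inv _ (ht k).2
  choose Qs hQs using hQk
  haveI : FirstCountableTopology (Matrix (Fin d) (Fin d) ℝ) :=
    inferInstanceAs (FirstCountableTopology ((Fin d) → (Fin d) → ℝ))
  obtain ⟨Q, hQmem, φ, hφ, hconv⟩ :=
    isCompact_setOrth.tendsto_subseq (fun k => ((hQs k).1 : Qs k ∈ {Q | IsOrth Q}))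
  have ht0 : Tendsto (fun k => t (φ k)) atTop (nhds 0) := by
    have hub : Tendsto (fun k : ℕ => 1/((k:ℝ)+1)) atTop (nhds 0) :=
      tendsto_one_div_add_atTop_nhds_zero_nat
    apply tendsto_of_tendsto_of_tendsto_of_le_of_le tendsto_const_nhds hub
    · intro k; exact le_of_lt (ht (φ k)).1.1
    · intro k
      have h1 : t (φ k) < 1/((φ k : ℝ)+1) := (ht (φ k)).1.2
      have h2 : 1/((φ k:ℝ)+1) ≤ 1/((k:ℝ)+1) := by
        apply one_div_le_one_div_of_le (by positivity)
        have hk : k ≤ φ k := hφ.le_apply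
        have : ((k:ℝ)) ≤ ((φ k : ℕ) : ℝ) := Nat.cast_le.2 hk
        linarith
      linarith
  have hHconv : Tendsto (fun k => (Qs (φ k))ᵀ * (M + t (φ k) • 1)) atTop
      (nhds (Qᵀ * M)) := by
    have hc : Continuous fun p : Matrix (Fin d) (Fin d) ℝ × ℝ =>
        p.1ᵀ * (M + p.2 • (1 : Matrix (Fin d) (Fin d) ℝ)) :=
      (continuous_fst.matrix_transpose).matrix_mul
        (continuous_const.add (continuous_snd.smul continuous_const))
    have hconv' : Tendsto (fun k => Qs (φ k)) atTop (nhds Q) := hconv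
    have hpt : Tendsto (fun k => (Qs (φ k), t (φ k))) atTop (nhds (Q, 0)) :=
      Tendsto.prodMk_nhds hconv' ht0
    have := (hc.tendsto (Q, (0:ℝ))).comp hpt
    simpa [Function.comp_def] using this
  refine ⟨Q, hQmem, Matrix.PosSemidef.of_dotProduct_mulVec_nonneg ?_ ?_⟩
  · show (Qᵀ * M)ᴴ = Qᵀ * M
    rw [real_ctrans]
    have hsymk : (fun k => ((Qs (φ k))ᵀ * (M + t (φ k) • 1))ᵀ)
        = fun k => (Qs (φ k))ᵀ * (M + t (φ k) • 1) := by
      funext k; exact herm_transpose_eq (hQs (φ k)).2.1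
    have h2 : Tendsto (fun k => ((Qs (φ k))ᵀ * (M + t (φ k) • 1))ᵀ) atTop
        (nhds ((Qᵀ * M)ᵀ)) :=
      ((continuous_id.matrix_transpose).tendsto (Qᵀ * M)).comp hHconv
    rw [hsymk] at h2
    exact tendsto_nhds_unique h2 hHconv
  · intro x
    rw [star_id_pi]
    have hck : ∀ k, 0 ≤ x ⬝ᵥ ((Qs (φ k))ᵀ * (M + t (φ k) • 1)).mulVec x := fun k => by
      have := (hQs (φ k)).2.dotProduct_mulVec_nonneg x
      rwa [star_id_pi] at this
    have hcont : Continuous fun N : Matrix (Fin d) (Fin d) ℝ => x ⬝ᵥ N.mulVec x :=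
      continuous_const.dotProduct (continuous_id.matrix_mulVec continuous_const)
    have hT : Tendsto (fun k => x ⬝ᵥ ((Qs (φ k))ᵀ * (M + t (φ k) • 1)).mulVec x) atTop
        (nhds (x ⬝ᵥ (Qᵀ * M).mulVec x)) := (hcont.tendsto _).comp hHconv
    exact ge_of_tendsto hT (Filter.Eventually.of_forall hck)

lemma frob_sub_rev {α β : Type*} [Fintype α] [Fintype β] (A B : Matrix α β ℝ) :
    frob (A - B) = frob (B - A) := by
  rw [frob_eq, frob_eq, mE_sub, mE_sub]; exact norm_sub_rev _ _

lemma dF_set_nonempty {n d : ℕ} (X Y : Matrix (Fin n × Fin d) (Fin d) ℝ) :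
    {r : ℝ | ∃ Q, IsOrth Q ∧ r = frob (X - Y * Q)}.Nonempty :=
  ⟨frob (X - Y * 1), 1, isOrth_one, rfl⟩

lemma dF_bddBelow {n d : ℕ} (X Y : Matrix (Fin n × Fin d) (Fin d) ℝ) :
    BddBelow {r : ℝ | ∃ Q, IsOrth Q ∧ r = frob (X - Y * Q)} := by
  refine ⟨0, ?_⟩
  rintro r ⟨Q, hQ, rfl⟩
  exact frob_nonneg _

lemma dF_le {n d : ℕ} (X Y : Matrix (Fin n × Fin d) (Fin d) ℝ)
    {Q : Matrix (Fin d) (Fin d) ℝ} (hQ : IsOrth Q) : dF X Y ≤ frob (X - Y * Q) :=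
  csInf_le (dF_bddBelow X Y) ⟨Q, hQ, rfl⟩

lemma dF_nonneg {n d : ℕ} (X Y : Matrix (Fin n × Fin d) (Fin d) ℝ) : 0 ≤ dF X Y := by
  apply le_csInf (dF_set_nonempty X Y)
  rintro r ⟨Q, hQ, rfl⟩
  exact frob_nonneg _

lemma continuous_frob_affine {n d : ℕ} (X Y : Matrix (Fin n × Fin d) (Fin d) ℝ) :
    Continuous fun R : Matrix (Fin d) (Fin d) ℝ => frob (X - Y * R) := by
  have h1 : Continuous fun R : Matrix (Fin d) (Fin d) ℝ => X - Y * R :=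
    continuous_const.sub (continuous_const.matrix_mul continuous_id)
  unfold frob
  apply Real.continuous_sqrt.comp
  apply continuous_finset_sum; intro i _
  apply continuous_finset_sum; intro j _
  exact (h1.matrix_elem i j).pow 2

lemma exists_dF_min {n d : ℕ} (X Y : Matrix (Fin n × Fin d) (Fin d) ℝ) :
    ∃ R, IsOrth R ∧ frob (X - Y * R) = dF X Y := by
  obtain ⟨R, hRmem, hmin⟩ := isCompact_setOrth.exists_isMinOn ⟨1, isOrth_one⟩
    (continuous_frob_affine X Y).continuousOn
  refine ⟨R, hRmem, le_antisymm ?_ (dF_le X Y hRmem)⟩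
  apply le_csInf (dF_set_nonempty X Y)
  rintro r ⟨Q, hQ, rfl⟩
  exact isMinOn_iff.1 hmin Q hQ

lemma dF_triangle {n d : ℕ} (X Y W : Matrix (Fin n × Fin d) (Fin d) ℝ) :
    dF X Y ≤ dF X W + dF Y W := by
  obtain ⟨R1, hR1, h1⟩ := exists_dF_min X W
  obtain ⟨R2, hR2, h2⟩ := exists_dF_min Y W
  have hQ : IsOrth (R2ᵀ * R1) := (hR2.transpose).mul hR1
  calc dF X Y ≤ frob (X - Y * (R2ᵀ * R1)) := dF_le X Y hQ
    _ ≤ frob (X - W * R1) + frob (W * R1 - Y * (R2ᵀ * R1)) := by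
        rw [show X - Y * (R2ᵀ * R1)
            = (X - W * R1) + (W * R1 - Y * (R2ᵀ * R1)) from (sub_add_sub_cancel _ _ _).symm]
        exact frob_add_le _ _
    _ = dF X W + dF Y W := by
        erw [h1]
        congr 1
        rw [← h2]
        have e1 : W * R1 - Y * (R2ᵀ * R1) = (W - Y * R2ᵀ) * R1 := by
          rw [Matrix.sub_mul, Matrix.mul_assoc]
        rw [e1, frob_mul_orth _ hR1, frob_sub_rev]
        have e2 : Y * R2ᵀ - W = (Y - W * R2) * R2ᵀ := by
          rw [Matrix.sub_mul, Matrix.mul_assoc, hR2.2, Matrix.mul_one]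
        rw [e2, frob_mul_orth _ hR2.transpose]
        rfl

lemma blk_mul {n d k : ℕ} (Y : Matrix (Fin n × Fin d) (Fin d) ℝ)
    (Q : Matrix (Fin d) (Fin k) ℝ) (i : Fin n) : blk (Y * Q) i = blk Y i * Q := by
  ext a b; simp [blk, mul_apply]

lemma blk_sub {n d k : ℕ} (X Y : Matrix (Fin n × Fin d) (Fin k) ℝ) (i : Fin n) :
    blk (X - Y) i = blk X i - blk Y i := by
  ext a b; simp [blk]

lemma blk_Z {n d : ℕ} (i : Fin n) : blk (ZStack n d) i = 1 := by
  ext a b; simp [blk, ZStack, Matrix.one_apply]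

lemma transpose_mul_blocks {n d k k' : ℕ} (Y : Matrix (Fin n × Fin d) (Fin k) ℝ)
    (E : Matrix (Fin n × Fin d) (Fin k') ℝ) :
    Yᵀ * E = ∑ i, (blk Y i)ᵀ * blk E i := by
  ext a b
  rw [mul_apply, show (∑ i, (blk Y i)ᵀ * blk E i) a b = ∑ i, ((blk Y i)ᵀ * blk E i) a b from
    by simp [Matrix.sum_apply]]
  rw [Fintype.sum_prod_type]
  apply Finset.sum_congr rfl; intro i _
  rw [mul_apply]
  apply Finset.sum_congr rfl; intro c _
  simp [blk, transpose_apply]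

lemma Ztrans_mul {n d k : ℕ} (E : Matrix (Fin n × Fin d) (Fin k) ℝ) :
    (ZStack n d)ᵀ * E = ∑ i, blk E i := by
  ext a b
  rw [mul_apply, show (∑ i, blk E i) a b = ∑ i, blk E i a b from by simp [Matrix.sum_apply]]
  rw [Fintype.sum_prod_type]
  apply Finset.sum_congr rfl; intro i _
  rw [Finset.sum_eq_single a]
  · simp [ZStack, blk, transpose_apply]
  · intro c _ hc; simp [ZStack, blk, transpose_apply, hc]
  · simp

lemma YtY_eq {n d : ℕ} {Y : Matrix (Fin n × Fin d) (Fin d) ℝ} (hY : OrthBlocks Y) :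
    Yᵀ * Y = (n : ℝ) • (1 : Matrix (Fin d) (Fin d) ℝ) := by
  rw [transpose_mul_blocks]
  have : ∀ i : Fin n, (blk Y i)ᵀ * blk Y i = (1 : Matrix (Fin d) (Fin d) ℝ) := fun i => (hY i).1
  rw [Finset.sum_congr rfl fun i _ => this i, Finset.sum_const, Finset.card_univ,
    Fintype.card_fin, ← Nat.cast_smul_eq_nsmul ℝ]

lemma frob_sq_blocks {n d k : ℕ} (S : Matrix (Fin n × Fin d) (Fin k) ℝ) :
    frob S ^ 2 = ∑ i, frob (blk S i) ^ 2 := by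
  rw [frob_sq, Fintype.sum_prod_type]
  apply Finset.sum_congr rfl; intro i _
  rw [frob_sq]
  rfl

lemma frob_zero {α β : Type*} [Fintype α] [Fintype β] : frob (0 : Matrix α β ℝ) = 0 := by
  simp [frob]

lemma frob_sum_le {α β ι : Type*} [Fintype α] [Fintype β] (s : Finset ι)
    (M : ι → Matrix α β ℝ) : frob (∑ i ∈ s, M i) ≤ ∑ i ∈ s, frob (M i) := by
  classical
  induction s using Finset.induction with
  | empty => simp [frob_zero]
  | insert _ _ hne ih =>
    rw [Finset.sum_insert hne, Finset.sum_insert hne]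
    exact le_trans (frob_add_le _ _) (by linarith)

lemma sum_cs {n : ℕ} (a b : Fin n → ℝ) (ha : ∀ i, 0 ≤ a i) (hb : ∀ i, 0 ≤ b i) :
    ∑ i, a i * b i ≤ Real.sqrt (∑ i, a i ^ 2) * Real.sqrt (∑ i, b i ^ 2) := by
  have h1 : (∑ i, a i * b i) ^ 2 ≤ (∑ i, a i ^ 2) * (∑ i, b i ^ 2) :=
    Finset.sum_mul_sq_le_sq_mul_sq _ _ _
  apply le_of_sq_le_sq (mul_nonneg (Real.sqrt_nonneg _) (Real.sqrt_nonneg _))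
  · rw [mul_pow, Real.sq_sqrt (by positivity), Real.sq_sqrt (by positivity)]
    exact h1
  · exact Finset.sum_nonneg fun i _ => mul_nonneg (ha i) (hb i)

lemma opNorm_add_le {α β : Type*} [Fintype α] [Fintype β] [Nonempty β]
    (A B : Matrix α β ℝ) : opNorm (A + B) ≤ opNorm A + opNorm B := by
  apply opNorm_le_of; intro u hu
  rw [Matrix.add_mulVec]
  have : vnorm (A.mulVec u + B.mulVec u) ≤ vnorm (A.mulVec u) + vnorm (B.mulVec u) := by
    rw [vnorm_eq, vnorm_eq, vnorm_eq]
    exact norm_add_le (vE _) (vE _)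
  apply le_trans this
  have h1 := le_opNorm A u
  have h2 := le_opNorm B u
  rw [hu, mul_one] at h1 h2
  linarith

lemma opNorm_smul_le {α β : Type*} [Fintype α] [Fintype β] [Nonempty β]
    (c : ℝ) (A : Matrix α β ℝ) : opNorm (c • A) ≤ |c| * opNorm A := by
  apply opNorm_le_of; intro u hu
  rw [Matrix.smul_mulVec, vnorm_smul]
  have h1 := le_opNorm A u
  rw [hu, mul_one] at h1
  exact mul_le_mul_of_nonneg_left h1 (abs_nonneg c)

lemma opNorm_orthBlocks {n d : ℕ} [Nonempty (Fin d)] {S : Matrix (Fin n × Fin d) (Fin d) ℝ}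
    (hS : OrthBlocks S) : opNorm S ≤ Real.sqrt n := by
  apply opNorm_le_of; intro u hu
  apply le_of_sq_le_sq (Real.sqrt_nonneg _) _ (vnorm_nonneg _)
  rw [Real.sq_sqrt (Nat.cast_nonneg n), vnorm_sq, Fintype.sum_prod_type]
  have he : ∀ i : Fin n, ∑ a, (S.mulVec u (i, a)) ^ 2 = vnorm ((blk S i).mulVec u) ^ 2 := by
    intro i; rw [vnorm_sq]; apply Finset.sum_congr rfl; intro a _; rfl
  rw [Finset.sum_congr rfl fun i _ => he i]
  have : ∑ i : Fin n, vnorm ((blk S i).mulVec u) ^ 2 = ∑ _i : Fin n, (1:ℝ) := by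
    apply Finset.sum_congr rfl; intro i _
    rw [vnorm_orth_mulVec (hS i) u, hu]; norm_num
  rw [this]
  simp

lemma orthBlocks_Z {n d : ℕ} : OrthBlocks (ZStack n d) := fun i => by
  rw [blk_Z]; exact isOrth_one

lemma opNorm_Z_le {n d : ℕ} [Nonempty (Fin d)] : opNorm (ZStack n d) ≤ Real.sqrt n :=
  opNorm_orthBlocks orthBlocks_Z

lemma trace_orth_mul_psd_le {d : ℕ} [Nonempty (Fin d)] {P H : Matrix (Fin d) (Fin d) ℝ}
    (hP : IsOrth P) (hH : H.PosSemidef) : Matrix.trace (P * H) ≤ Matrix.trace H := by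
  classical
  obtain ⟨r, hrpsd, hrr⟩ := psd_sqrt_exists hH
  have hrh : rᵀ = r := herm_transpose_eq hrpsd.1
  have e1 : Matrix.trace (P * H) = Matrix.trace (rᵀ * (P * r)) := by
    rw [← hrr, hrh, ← Matrix.mul_assoc, Matrix.trace_mul_comm (P * r) r]
  rw [e1]
  calc Matrix.trace (rᵀ * (P * r)) ≤ frob r * frob (P * r) := trace_form_le _ _
    _ = frob r * frob r := by rw [frob_orth_mul hP r]
    _ = frob r ^ 2 := (sq (frob r)).symm
    _ = Matrix.trace (rᵀ * r) := frob_sq_eq_trace r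
    _ = Matrix.trace H := by rw [hrh, hrr]

lemma frob_sub_sq_expand {n d : ℕ} (X Y : Matrix (Fin n × Fin d) (Fin d) ℝ)
    (hX : Xᵀ * X = (n : ℝ) • (1 : Matrix (Fin d) (Fin d) ℝ))
    (hY : Yᵀ * Y = (n : ℝ) • (1 : Matrix (Fin d) (Fin d) ℝ))
    {Q : Matrix (Fin d) (Fin d) ℝ} (hQ : IsOrth Q) :
    frob (X - Y * Q) ^ 2
      = 2 * n * d - 2 * Matrix.trace (Qᵀ * (Yᵀ * X)) := by
  rw [frob_sq_eq_trace]
  have e : (X - Y * Q)ᵀ * (X - Y * Q)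
      = Xᵀ * X - Xᵀ * (Y * Q) - ((Y * Q)ᵀ * X - (Y * Q)ᵀ * (Y * Q)) := by
    rw [transpose_sub, Matrix.sub_mul, Matrix.mul_sub, Matrix.mul_sub]
  rw [e]
  have t1 : Matrix.trace (Xᵀ * X) = (n : ℝ) * d := by
    rw [hX, Matrix.trace_smul, Matrix.trace_one, Fintype.card_fin]
    simp [smul_eq_mul]
  have t4 : Matrix.trace ((Y * Q)ᵀ * (Y * Q)) = (n : ℝ) * d := by
    have : (Y * Q)ᵀ * (Y * Q) = Qᵀ * (Yᵀ * Y) * Q := by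
      rw [transpose_mul, Matrix.mul_assoc, Matrix.mul_assoc, Matrix.mul_assoc]
    rw [this, hY]
    rw [Matrix.mul_smul, Matrix.smul_mul, Matrix.mul_one, hQ.1, Matrix.trace_smul,
      Matrix.trace_one, Fintype.card_fin]
    simp [smul_eq_mul]
  have t2 : Matrix.trace (Xᵀ * (Y * Q)) = Matrix.trace (Qᵀ * (Yᵀ * X)) := by
    have : (Qᵀ * (Yᵀ * X))ᵀ = Xᵀ * (Y * Q) := by
      rw [transpose_mul, transpose_mul, transpose_transpose, transpose_transpose,
        Matrix.mul_assoc]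
    rw [← this, Matrix.trace_transpose]
  have t3 : Matrix.trace ((Y * Q)ᵀ * X) = Matrix.trace (Qᵀ * (Yᵀ * X)) := by
    rw [transpose_mul, Matrix.mul_assoc]
  rw [Matrix.trace_sub, Matrix.trace_sub, Matrix.trace_sub, t1, t2, t3, t4]
  ring

lemma Zt_mul_E_bound {n d : ℕ} [Nonempty (Fin d)] (X Y : Matrix (Fin n × Fin d) (Fin d) ℝ)
    (hY : OrthBlocks Y) (Q R : Matrix (Fin d) (Fin d) ℝ) (hR : IsOrth R) :
    frob ((ZStack n d)ᵀ * (X - Y * Q))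
      ≤ frob (Y - ZStack n d * R) * frob (X - Y * Q) + frob (Yᵀ * (X - Y * Q)) := by
  set E := X - Y * Q with hE
  have key : (ZStack n d)ᵀ * E
      = (∑ i, (blk Y i - R) * ((blk Y i)ᵀ * blk E i)) + R * (Yᵀ * E) := by
    rw [Ztrans_mul, transpose_mul_blocks Y E, Finset.mul_sum, ← Finset.sum_add_distrib]
    apply Finset.sum_congr rfl; intro i _
    rw [Matrix.sub_mul, sub_add_cancel, ← Matrix.mul_assoc, (hY i).2, Matrix.one_mul]
  rw [key]
  apply le_trans (frob_add_le _ _)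
  have h2 : frob (R * (Yᵀ * E)) = frob (Yᵀ * E) := frob_orth_mul hR _
  have h1 : frob (∑ i, (blk Y i - R) * ((blk Y i)ᵀ * blk E i))
      ≤ frob (Y - ZStack n d * R) * frob E := by
    calc frob (∑ i, (blk Y i - R) * ((blk Y i)ᵀ * blk E i))
        ≤ ∑ i, frob ((blk Y i - R) * ((blk Y i)ᵀ * blk E i)) := frob_sum_le _ _
      _ ≤ ∑ i, frob (blk Y i - R) * frob ((blk Y i)ᵀ * blk E i) := by
          apply Finset.sum_le_sum; intro i _
          calc frob ((blk Y i - R) * ((blk Y i)ᵀ * blk E i))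
              ≤ opNorm (blk Y i - R) * frob ((blk Y i)ᵀ * blk E i) := frob_mul_le _ _
            _ ≤ frob (blk Y i - R) * frob ((blk Y i)ᵀ * blk E i) :=
                mul_le_mul_of_nonneg_right (opNorm_le_frob _) (frob_nonneg _)
      _ = ∑ i, frob (blk Y i - R) * frob (blk E i) := by
          apply Finset.sum_congr rfl; intro i _
          rw [frob_orth_mul (hY i).transpose]
      _ ≤ Real.sqrt (∑ i, frob (blk Y i - R) ^ 2) * Real.sqrt (∑ i, frob (blk E i) ^ 2) :=
          sum_cs _ _ (fun i => frob_nonneg _) (fun i => frob_nonneg _)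
      _ = frob (Y - ZStack n d * R) * frob E := by
          have hb : ∀ i : Fin n, blk (Y - ZStack n d * R) i = blk Y i - R := by
            intro i; rw [blk_sub, blk_mul, blk_Z, Matrix.one_mul]
          rw [show (∑ i, frob (blk Y i - R) ^ 2) = ∑ i, frob (blk (Y - ZStack n d * R) i) ^ 2
              from Finset.sum_congr rfl fun i _ => by rw [hb i]]
          rw [← frob_sq_blocks, ← frob_sq_blocks, Real.sqrt_sq (frob_nonneg _),
            Real.sqrt_sq (frob_nonneg _)]
  linarith

lemma exists_good_Q {n d : ℕ} [Nonempty (Fin n)] [Nonempty (Fin d)]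
    (X Y : Matrix (Fin n × Fin d) (Fin d) ℝ)
    (hX : OrthBlocks X) (hY : OrthBlocks Y) :
    ∃ Q, IsOrth Q ∧ frob (X - Y * Q) ≤ dF X Y ∧
      frob (Yᵀ * (X - Y * Q)) ≤ frob (X - Y * Q) ^ 2 / 2 := by
  obtain ⟨Q, hQ, hH⟩ := exists_polar (Yᵀ * X)
  have hXX := YtY_eq hX
  have hYY := YtY_eq hY
  have hQH : Q * (Qᵀ * (Yᵀ * X)) = Yᵀ * X := by
    rw [← Matrix.mul_assoc, hQ.2, Matrix.one_mul]
  have hmax : ∀ Q' : Matrix (Fin d) (Fin d) ℝ, IsOrth Q' →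
      Matrix.trace (Q'ᵀ * (Yᵀ * X)) ≤ Matrix.trace (Qᵀ * (Yᵀ * X)) := by
    intro Q' hQ'
    have he : Q'ᵀ * (Yᵀ * X) = (Q'ᵀ * Q) * (Qᵀ * (Yᵀ * X)) := by
      rw [Matrix.mul_assoc, hQH]
    rw [he]
    exact trace_orth_mul_psd_le (hQ'.transpose.mul hQ) hH
  have hexp : ∀ Q' : Matrix (Fin d) (Fin d) ℝ, IsOrth Q' →
      frob (X - Y * Q') ^ 2 = 2*(n:ℝ)*(d:ℝ) - 2 * Matrix.trace (Q'ᵀ * (Yᵀ * X)) :=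
    fun Q' hq => frob_sub_sq_expand X Y hXX hYY hq
  have hEQ : frob (X - Y * Q) ^ 2
      = 2*(n:ℝ)*(d:ℝ) - 2 * Matrix.trace (Qᵀ * (Yᵀ * X)) := hexp Q hQ
  have hmin : frob (X - Y * Q) ≤ dF X Y := by
    apply le_csInf (dF_set_nonempty X Y)
    rintro r ⟨Q', hQ', rfl⟩
    apply le_of_sq_le_sq (frob_nonneg _) _ (frob_nonneg _)
    erw [hEQ, hexp Q' hQ']
    have := hmax Q' hQ'
    linarith
  have hHsym : (Qᵀ * (Yᵀ * X))ᵀ = Qᵀ * (Yᵀ * X) := herm_transpose_eq hH.1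
  have hsqrtn : Real.sqrt n * Real.sqrt n = (n:ℝ) := Real.mul_self_sqrt (Nat.cast_nonneg n)
  have hopH : opNorm (Qᵀ * (Yᵀ * X)) ≤ (n : ℝ) := by
    have hYt : opNorm Yᵀ ≤ Real.sqrt n :=
      le_trans (opNorm_transpose_le Y) (opNorm_orthBlocks hY)
    have hXle : opNorm X ≤ Real.sqrt n := opNorm_orthBlocks hX
    calc opNorm (Qᵀ * (Yᵀ * X)) ≤ opNorm Qᵀ * opNorm (Yᵀ * X) := opNorm_mul_le _ _
      _ ≤ 1 * opNorm (Yᵀ * X) :=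
          mul_le_mul_of_nonneg_right (opNorm_orth_le hQ.transpose) (opNorm_nonneg _)
      _ = opNorm (Yᵀ * X) := one_mul _
      _ ≤ opNorm Yᵀ * opNorm X := opNorm_mul_le _ _
      _ ≤ Real.sqrt n * Real.sqrt n := by
          apply mul_le_mul hYt hXle (opNorm_nonneg _) (Real.sqrt_nonneg _)
      _ = (n:ℝ) := hsqrtn
  have hpsd := posSemidef_smul_one_sub hHsym hopH
  have hYtE : Yᵀ * (X - Y * Q) = Q * ((Qᵀ * (Yᵀ * X)) - (n:ℝ) • 1) := by
    rw [Matrix.mul_sub, ← Matrix.mul_assoc Yᵀ Y Q, hYY, Matrix.mul_sub, hQH,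
      Matrix.mul_smul, Matrix.mul_one, Matrix.smul_mul, Matrix.one_mul]
  refine ⟨Q, hQ, hmin, ?_⟩
  calc frob (Yᵀ * (X - Y * Q)) = frob ((Qᵀ * (Yᵀ * X)) - (n:ℝ) • 1) := by
        rw [hYtE, frob_orth_mul hQ]
    _ = frob ((n:ℝ) • (1:Matrix (Fin d) (Fin d) ℝ) - Qᵀ * (Yᵀ * X)) := frob_sub_rev _ _
    _ ≤ Matrix.trace ((n:ℝ) • (1:Matrix (Fin d) (Fin d) ℝ) - Qᵀ * (Yᵀ * X)) :=
        frob_le_trace_of_posSemidef hpsd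
    _ = (n:ℝ)*(d:ℝ) - Matrix.trace (Qᵀ * (Yᵀ * X)) := by
        rw [Matrix.trace_sub, Matrix.trace_smul, Matrix.trace_one, Fintype.card_fin]
        simp [smul_eq_mul]
    _ = frob (X - Y * Q) ^ 2 / 2 := by rw [hEQ]; ring

lemma sigmaMin_le_opNorm {d m : ℕ} [Nonempty (Fin d)] [Nonempty (Fin m)]
    (A : Matrix (Fin d) (Fin m) ℝ) : sigmaMin A ≤ opNorm A := by
  obtain ⟨u, hu⟩ := exists_unit (β := Fin d)
  have hb : BddBelow {r : ℝ | ∃ u : Fin d → ℝ, vnorm u = 1 ∧ r = vnorm (Matrix.vecMul u A)} := by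
    refine ⟨0, ?_⟩; rintro r ⟨u, hu, rfl⟩; exact vnorm_nonneg _
  have h1 : sigmaMin A ≤ vnorm (Matrix.vecMul u A) := csInf_le hb ⟨u, hu, rfl⟩
  apply le_trans h1
  rw [← Matrix.mulVec_transpose]
  calc vnorm (Aᵀ.mulVec u) ≤ opNorm Aᵀ * vnorm u := le_opNorm Aᵀ u
    _ = opNorm Aᵀ := by rw [hu, mul_one]
    _ ≤ opNorm A := opNorm_transpose_le A

end AuxLemmas

/-- Lemma 5.2: if σ‖W‖ ≤ √n‖A‖ then ‖Δ‖ ≤ 3√n‖A‖‖W‖, and L is a contraction: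
for X, Y ∈ N_ε, d_F(LX, LY) ≤ (2ε√d + 3σ‖W‖/(√n‖A‖))·d_F(X,Y). -/
theorem Lop_contraction (n d m : ℕ) (hn : 1 ≤ n) (hd : 1 ≤ d) (hm : d ≤ m)
    (A : Matrix (Fin d) (Fin m) ℝ) (hA : 0 < sigmaMin A)
    (W : Matrix (Fin n × Fin d) (Fin m) ℝ) (σ : ℝ) (hσ : 0 < σ)
    (hσW : σ * opNorm W ≤ Real.sqrt (n : ℝ) * opNorm A) :
    opNorm (delta A W σ) ≤ 3 * Real.sqrt (n : ℝ) * opNorm A * opNorm W ∧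
    ∀ ε : ℝ, 0 < ε → ∀ X Y : Matrix (Fin n × Fin d) (Fin d) ℝ,
      memNeps ε X → memNeps ε Y →
      dF (Lop A W σ X) (Lop A W σ Y) ≤
        (2 * ε * Real.sqrt (d : ℝ) +
          3 * σ * opNorm W / (Real.sqrt (n : ℝ) * opNorm A)) * dF X Y := by
  haveI hnd : NeZero n := ⟨by omega⟩
  haveI hdd : NeZero d := ⟨by omega⟩
  haveI hmd : NeZero m := ⟨by omega⟩
  haveI : Nonempty (Fin n) := Fin.pos_iff_nonempty.1 (by omega)
  haveI : Nonempty (Fin d) := Fin.pos_iff_nonempty.1 (by omega)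
  haveI : Nonempty (Fin m) := Fin.pos_iff_nonempty.1 (by omega)
  set a := opNorm A with hadef
  set w := opNorm W with hwdef
  have ha : 0 < a := lt_of_lt_of_le hA (sigmaMin_le_opNorm A)
  have hw : 0 ≤ w := opNorm_nonneg W
  have hsn : 0 < Real.sqrt n := Real.sqrt_pos.2 (by positivity)
  have hZle : opNorm (ZStack n d) ≤ Real.sqrt n := opNorm_Z_le
  have hZtle : opNorm (ZStack n d)ᵀ ≤ Real.sqrt n :=
    le_trans (opNorm_transpose_le _) hZle
  have hAt : opNorm Aᵀ ≤ a := opNorm_transpose_le A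
  have hWt : opNorm Wᵀ ≤ w := opNorm_transpose_le W
  have hZnn : 0 ≤ opNorm (ZStack n d) := opNorm_nonneg _
  -- Delta bound
  have h1 : opNorm (W * Aᵀ * (ZStack n d)ᵀ) ≤ w * a * Real.sqrt n := by
    calc opNorm (W * Aᵀ * (ZStack n d)ᵀ)
        ≤ opNorm (W * Aᵀ) * opNorm (ZStack n d)ᵀ := opNorm_mul_le _ _
      _ ≤ (w * a) * Real.sqrt n := by
          apply mul_le_mul _ hZtle (opNorm_nonneg _) (by positivity)
          calc opNorm (W * Aᵀ) ≤ opNorm W * opNorm Aᵀ := opNorm_mul_le _ _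
            _ ≤ w * a := mul_le_mul_of_nonneg_left hAt hw
  have h2 : opNorm (ZStack n d * A * Wᵀ) ≤ Real.sqrt n * a * w := by
    calc opNorm (ZStack n d * A * Wᵀ)
        ≤ opNorm (ZStack n d * A) * opNorm Wᵀ := opNorm_mul_le _ _
      _ ≤ (Real.sqrt n * a) * w := by
          apply mul_le_mul _ hWt (opNorm_nonneg _) (by positivity)
          calc opNorm (ZStack n d * A) ≤ opNorm (ZStack n d) * opNorm A := opNorm_mul_le _ _
            _ ≤ Real.sqrt n * a := mul_le_mul_of_nonneg_right hZle (le_of_lt ha)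
  have h3 : opNorm (σ • (W * Wᵀ)) ≤ Real.sqrt n * a * w := by
    calc opNorm (σ • (W * Wᵀ)) ≤ |σ| * opNorm (W * Wᵀ) := opNorm_smul_le _ _
      _ = σ * opNorm (W * Wᵀ) := by rw [abs_of_pos hσ]
      _ ≤ σ * (w * w) := by
          apply mul_le_mul_of_nonneg_left _ (le_of_lt hσ)
          calc opNorm (W * Wᵀ) ≤ opNorm W * opNorm Wᵀ := opNorm_mul_le _ _
            _ ≤ w * w := mul_le_mul_of_nonneg_left hWt hw
      _ = (σ * w) * w := by ring
      _ ≤ (Real.sqrt n * a) * w := mul_le_mul_of_nonneg_right hσW hw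
  have hdelta : opNorm (delta A W σ) ≤ 3 * Real.sqrt n * a * w := by
    calc opNorm (delta A W σ)
        ≤ opNorm (W * Aᵀ * (ZStack n d)ᵀ + ZStack n d * A * Wᵀ) + opNorm (σ • (W * Wᵀ)) :=
          opNorm_add_le _ _
      _ ≤ (opNorm (W * Aᵀ * (ZStack n d)ᵀ) + opNorm (ZStack n d * A * Wᵀ))
          + opNorm (σ • (W * Wᵀ)) := by
          have := opNorm_add_le (W * Aᵀ * (ZStack n d)ᵀ) (ZStack n d * A * Wᵀ)
          linarith
      _ ≤ 3 * Real.sqrt n * a * w := by nlinarith [h1, h2, h3]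
  refine ⟨hdelta, ?_⟩
  intro ε hε X Y hXm hYm
  obtain ⟨hXorth, hXd⟩ := hXm
  obtain ⟨hYorth, hYd⟩ := hYm
  obtain ⟨Q, hQ, hEle, hYtE⟩ := exists_good_Q X Y hXorth hYorth
  set E := X - Y * Q with hEdef
  have hF : 0 ≤ frob E := frob_nonneg E
  have hD : 0 ≤ dF X Y := dF_nonneg X Y
  have hdXY : dF X Y ≤ 2 * ε * Real.sqrt ((n:ℝ) * d) := by
    calc dF X Y ≤ dF X (ZStack n d) + dF Y (ZStack n d) := dF_triangle _ _ _
      _ ≤ 2 * ε * Real.sqrt ((n:ℝ)*d) := by linarith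
  obtain ⟨R, hR, hRmin⟩ := exists_dF_min Y (ZStack n d)
  have hYZR : frob (Y - ZStack n d * R) ≤ ε * Real.sqrt ((n:ℝ)*d) := by
    erw [hRmin]; exact hYd
  have hZtE : frob ((ZStack n d)ᵀ * E) ≤ 2 * ε * Real.sqrt ((n:ℝ)*d) * frob E := by
    have hb := Zt_mul_E_bound X Y hYorth Q R hR
    rw [← hEdef] at hb
    have hE2 : frob (Yᵀ * E) ≤ frob E ^ 2 / 2 := hYtE
    have hED : frob E ≤ 2 * ε * Real.sqrt ((n:ℝ)*d) := le_trans hEle hdXY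
    nlinarith [mul_le_mul_of_nonneg_right hYZR hF, frob_nonneg (Y - ZStack n d * R),
      frob_nonneg (Yᵀ * E)]
  -- L difference
  set C := ZStack n d * A * Aᵀ * (ZStack n d)ᵀ + σ • delta A W σ with hCdef
  set c := ((n : ℝ) * a ^ 2)⁻¹ with hcdef
  have hc : 0 ≤ c := by positivity
  have hLdiff : Lop A W σ X - Lop A W σ Y * Q = c • (C * E) := by
    show ((n : ℝ) * opNorm A ^ 2)⁻¹ • (C * X) - (((n : ℝ) * opNorm A ^ 2)⁻¹ • (C * Y)) * Q
      = c • (C * E)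
    rw [Matrix.smul_mul, ← smul_sub, hEdef, Matrix.mul_sub, Matrix.mul_assoc]
  have hdFL : dF (Lop A W σ X) (Lop A W σ Y) ≤ c * frob (C * E) := by
    calc dF (Lop A W σ X) (Lop A W σ Y) ≤ frob (Lop A W σ X - Lop A W σ Y * Q) :=
        dF_le _ _ hQ
      _ = c * frob (C * E) := by rw [hLdiff, frob_smul, abs_of_nonneg hc]
  have hCE : C * E = (ZStack n d * A * Aᵀ) * ((ZStack n d)ᵀ * E) + σ • (delta A W σ * E) := by
    rw [hCdef, Matrix.add_mul, Matrix.smul_mul, Matrix.mul_assoc]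
  have hopZAA : opNorm (ZStack n d * A * Aᵀ) ≤ Real.sqrt n * a * a := by
    calc opNorm (ZStack n d * A * Aᵀ) ≤ opNorm (ZStack n d * A) * opNorm Aᵀ :=
        opNorm_mul_le _ _
      _ ≤ (Real.sqrt n * a) * a := by
          apply mul_le_mul _ hAt (opNorm_nonneg _) (by positivity)
          calc opNorm (ZStack n d * A) ≤ opNorm (ZStack n d) * opNorm A := opNorm_mul_le _ _
            _ ≤ Real.sqrt n * a := mul_le_mul_of_nonneg_right hZle (le_of_lt ha)
  have hT1 : frob ((ZStack n d * A * Aᵀ) * ((ZStack n d)ᵀ * E))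
      ≤ (Real.sqrt n * a * a) * (2 * ε * Real.sqrt ((n:ℝ)*d) * frob E) := by
    calc frob ((ZStack n d * A * Aᵀ) * ((ZStack n d)ᵀ * E))
        ≤ opNorm (ZStack n d * A * Aᵀ) * frob ((ZStack n d)ᵀ * E) := frob_mul_le _ _
      _ ≤ (Real.sqrt n * a * a) * (2 * ε * Real.sqrt ((n:ℝ)*d) * frob E) := by
          apply mul_le_mul hopZAA hZtE (frob_nonneg _) (by positivity)
  have hT2 : frob (σ • (delta A W σ * E)) ≤ σ * ((3 * Real.sqrt n * a * w) * frob E) := by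
    rw [frob_smul, abs_of_pos hσ]
    apply mul_le_mul_of_nonneg_left _ (le_of_lt hσ)
    calc frob (delta A W σ * E) ≤ opNorm (delta A W σ) * frob E := frob_mul_le _ _
      _ ≤ (3 * Real.sqrt n * a * w) * frob E := mul_le_mul_of_nonneg_right hdelta hF
  have hfrobCE : frob (C * E)
      ≤ (Real.sqrt n * a * a) * (2 * ε * Real.sqrt ((n:ℝ)*d) * frob E)
        + σ * ((3 * Real.sqrt n * a * w) * frob E) := by
    rw [hCE]
    exact le_trans (frob_add_le _ _) (by linarith)
  -- arithmetic
  have hsq : Real.sqrt ((n:ℝ)*d) = Real.sqrt n * Real.sqrt d :=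
    Real.sqrt_mul (Nat.cast_nonneg n) _
  have hnn : Real.sqrt n * Real.sqrt n = (n:ℝ) := Real.mul_self_sqrt (Nat.cast_nonneg n)
  have hkey : c * ((Real.sqrt n * a * a) * (2 * ε * Real.sqrt ((n:ℝ)*d) * frob E)
        + σ * ((3 * Real.sqrt n * a * w) * frob E))
      = (2 * ε * Real.sqrt d + 3 * σ * w / (Real.sqrt n * a)) * frob E := by
    set s := Real.sqrt (n:ℝ) with hsdef
    have hns : (n:ℝ) = s * s := hnn.symm
    rw [hcdef, hsq, hns]
    have hs0 : s ≠ 0 := ne_of_gt hsn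
    field_simp
  have hfinal : dF (Lop A W σ X) (Lop A W σ Y)
      ≤ (2 * ε * Real.sqrt d + 3 * σ * w / (Real.sqrt n * a)) * frob E := by
    rw [← hkey]
    apply le_trans hdFL
    exact mul_le_mul_of_nonneg_left hfrobCE hc
  apply le_trans hfinal
  apply mul_le_mul_of_nonneg_left hEle
  positivity

end GOPP
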